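/- arXiv:2403.08951 — 4 statements merged into one kernel-verified Lean document; each statement's English description precedes it below -/
import Mathlib

section
/- There exists a constant κ > 0 such that for every admissible function u : [0,1] → ℂ (continuously differentiable with u(0) = u(1) = 0), the one-dimensional Gagliardo–Nirenberg inequality holds: ∫₀¹ |u(x)|⁴ dx ≤ (1/4) ∫₀¹ |u'(x)|² dx + (κ/2) (∫₀¹ |u(x)|² dx)³. -/
open MeasureTheory intervalIntegral

/-- A function `u : [0,1] → ℂ` is admissible if it is continuously differentiable
(with derivative `u'`) and satisfies the Dirichlet boundary conditions
`u 0 = 0`, `u 1 = 0`. -/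
def Admissible (u u' : ℝ → ℂ) : Prop :=
  (∀ x ∈ Set.Icc (0:ℝ) 1, HasDerivAt u (u' x) x) ∧
    ContinuousOn u' (Set.Icc (0:ℝ) 1) ∧ u 0 = 0 ∧ u 1 = 0

/-- One-dimensional Gagliardo–Nirenberg inequality:
`‖u‖₄⁴ ≤ (1/4)‖u'‖₂² + (κ/2)(‖u‖₂²)³` for all admissible `u`. -/
theorem gagliardo_nirenberg_dim_one :
    ∃ κ : ℝ, 0 < κ ∧
      ∀ u u' : ℝ → ℂ, Admissible u u' →
        (∫ x in (0:ℝ)..1, ‖u x‖ ^ 4) ≤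
          (1 / 4) * (∫ x in (0:ℝ)..1, ‖u' x‖ ^ 2) +
            (κ / 2) * (∫ x in (0:ℝ)..1, ‖u x‖ ^ 2) ^ 3 := by
  refine ⟨8, by norm_num, ?_⟩
  rintro u u' ⟨hd, hc', h0, _⟩
  have hcu : ContinuousOn u (Set.Icc (0:ℝ) 1) :=
    fun x hx => (hd x hx).continuousAt.continuousWithinAt
  have huIcc : Set.uIcc (0:ℝ) 1 = Set.Icc 0 1 := Set.uIcc_of_le (by norm_num)
  set A := ∫ x in (0:ℝ)..1, ‖u x‖ ^ 2 with hA
  set B := ∫ x in (0:ℝ)..1, ‖u' x‖ ^ 2 with hB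
  -- the pointwise derivative of ‖u‖²
  set h : ℝ → ℝ := fun t => 2 * (inner ℝ (u t) (u' t) : ℝ) with hh
  have hch : ContinuousOn h (Set.Icc (0:ℝ) 1) :=
    continuousOn_const.mul (hcu.inner hc')
  have hcp : ContinuousOn (fun t => 2 * ‖u t‖ * ‖u' t‖) (Set.Icc (0:ℝ) 1) :=
    (continuousOn_const.mul hcu.norm).mul hc'.norm
  have iu2 : IntervalIntegrable (fun x => ‖u x‖ ^ 2) volume 0 1 :=
    ((hcu.norm.pow 2).mono huIcc.subset).intervalIntegrable
  have iu4 : IntervalIntegrable (fun x => ‖u x‖ ^ 4) volume 0 1 :=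
    ((hcu.norm.pow 4).mono huIcc.subset).intervalIntegrable
  have iv2 : IntervalIntegrable (fun x => ‖u' x‖ ^ 2) volume 0 1 :=
    ((hc'.norm.pow 2).mono huIcc.subset).intervalIntegrable
  have ip : IntervalIntegrable (fun t => 2 * ‖u t‖ * ‖u' t‖) volume 0 1 :=
    (hcp.mono huIcc.subset).intervalIntegrable
  have hA0 : 0 ≤ A :=
    intervalIntegral.integral_nonneg (by norm_num) (fun x _ => by positivity)
  have hB0 : 0 ≤ B :=
    intervalIntegral.integral_nonneg (by norm_num) (fun x _ => by positivity)
  -- sup bound : ‖u x‖² ≤ ∫₀¹ 2‖u‖‖u'‖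
  have key : ∀ x ∈ Set.Icc (0:ℝ) 1, ‖u x‖ ^ 2 ≤ ∫ t in (0:ℝ)..1, 2 * ‖u t‖ * ‖u' t‖ := by
    intro x hx
    have hxsub : Set.uIcc (0:ℝ) x ⊆ Set.Icc 0 1 := by
      rw [Set.uIcc_of_le hx.1]; exact Set.Icc_subset_Icc le_rfl hx.2
    have hxsub' : Set.uIcc (0:ℝ) x ⊆ Set.uIcc 0 1 := huIcc ▸ hxsub
    have hx1sub : Set.uIcc x 1 ⊆ Set.Icc 0 1 := by
      rw [Set.uIcc_of_le hx.2]; exact Set.Icc_subset_Icc hx.1 le_rfl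
    have ihx : IntervalIntegrable h volume 0 x := (hch.mono hxsub).intervalIntegrable
    have ipx : IntervalIntegrable (fun t => 2 * ‖u t‖ * ‖u' t‖) volume 0 x :=
      (hcp.mono hxsub).intervalIntegrable
    have ipx1 : IntervalIntegrable (fun t => 2 * ‖u t‖ * ‖u' t‖) volume x 1 :=
      (hcp.mono hx1sub).intervalIntegrable
    have hftc : (∫ t in (0:ℝ)..x, h t) = ‖u x‖ ^ 2 - ‖u 0‖ ^ 2 :=
      intervalIntegral.integral_eq_sub_of_hasDerivAt
        (fun t ht => (hd t (hxsub ht)).norm_sq) ihx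
    have e0 : ‖u x‖ ^ 2 = ∫ t in (0:ℝ)..x, h t := by
      rw [hftc, h0]; simp
    calc ‖u x‖ ^ 2 = ∫ t in (0:ℝ)..x, h t := e0
      _ ≤ ∫ t in (0:ℝ)..x, 2 * ‖u t‖ * ‖u' t‖ := by
          refine intervalIntegral.integral_mono_on hx.1 ihx ipx fun t ht => ?_
          have := real_inner_le_norm (u t) (u' t)
          simp only [hh]; nlinarith
      _ ≤ ∫ t in (0:ℝ)..1, 2 * ‖u t‖ * ‖u' t‖ := by
          rw [← intervalIntegral.integral_add_adjacent_intervals ipx ipx1]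
          have : 0 ≤ ∫ t in x..1, 2 * ‖u t‖ * ‖u' t‖ :=
            intervalIntegral.integral_nonneg hx.2 (fun t _ => by positivity)
          linarith
  -- for any t > 0 : ∫₀¹ 2‖u‖‖u'‖ ≤ t A + B / t
  have step2 : ∀ t : ℝ, 0 < t →
      (∫ s in (0:ℝ)..1, 2 * ‖u s‖ * ‖u' s‖) ≤ t * A + B / t := by
    intro t ht
    have pointwise : ∀ s ∈ Set.Icc (0:ℝ) 1,
        2 * ‖u s‖ * ‖u' s‖ ≤ t * ‖u s‖ ^ 2 + ‖u' s‖ ^ 2 / t := by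
      intro s _
      set a := ‖u s‖; set b := ‖u' s‖
      have hst : Real.sqrt t ^ 2 = t := Real.sq_sqrt ht.le
      have hsp : 0 < Real.sqrt t := Real.sqrt_pos.2 ht
      calc 2 * a * b = 2 * (Real.sqrt t * a) * (b / Real.sqrt t) := by
            field_simp
        _ ≤ (Real.sqrt t * a) ^ 2 + (b / Real.sqrt t) ^ 2 := two_mul_le_add_sq _ _
        _ = t * a ^ 2 + b ^ 2 / t := by rw [mul_pow, div_pow, hst]
    have irhs : IntervalIntegrable (fun s => t * ‖u s‖ ^ 2 + ‖u' s‖ ^ 2 / t) volume 0 1 :=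
      (iu2.const_mul t).add (iv2.div_const t)
    calc (∫ s in (0:ℝ)..1, 2 * ‖u s‖ * ‖u' s‖)
        ≤ ∫ s in (0:ℝ)..1, (t * ‖u s‖ ^ 2 + ‖u' s‖ ^ 2 / t) :=
          intervalIntegral.integral_mono_on (by norm_num) ip irhs pointwise
      _ = t * A + B / t := by
          rw [intervalIntegral.integral_add (iu2.const_mul t) (iv2.div_const t),
            intervalIntegral.integral_const_mul, intervalIntegral.integral_div]
  -- main bound for any t > 0 : ∫₀¹ ‖u‖⁴ ≤ (t A + B/t) * A
  have step3 : ∀ t : ℝ, 0 < t →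
      (∫ x in (0:ℝ)..1, ‖u x‖ ^ 4) ≤ (t * A + B / t) * A := by
    intro t ht
    have hsup : ∀ x ∈ Set.Icc (0:ℝ) 1, ‖u x‖ ^ 2 ≤ t * A + B / t :=
      fun x hx => (key x hx).trans (step2 t ht)
    have pw : ∀ x ∈ Set.Icc (0:ℝ) 1, ‖u x‖ ^ 4 ≤ (t * A + B / t) * ‖u x‖ ^ 2 := by
      intro x hx
      have h1 := hsup x hx
      have h2 : (0:ℝ) ≤ ‖u x‖ ^ 2 := by positivity
      nlinarith
    calc (∫ x in (0:ℝ)..1, ‖u x‖ ^ 4)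
        ≤ ∫ x in (0:ℝ)..1, (t * A + B / t) * ‖u x‖ ^ 2 :=
          intervalIntegral.integral_mono_on (by norm_num) iu4 (iu2.const_mul _) pw
      _ = (t * A + B / t) * A := intervalIntegral.integral_const_mul _ _
  -- conclude by letting t = 4A + s, s → 0
  have final : (∫ x in (0:ℝ)..1, ‖u x‖ ^ 4) ≤ (1/4) * B + 4 * A ^ 3 := by
    refine le_of_forall_pos_le_add fun ε hε => ?_
    set s := ε / (A ^ 2 + 1) with hs
    have hspos : 0 < s := by positivity
    have ht : 0 < 4 * A + s := by linarith
    have h1 : B / (4 * A + s) * A ≤ B / 4 := by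
      rw [div_mul_eq_mul_div, div_le_div_iff₀ ht (by norm_num)]
      nlinarith
    have hsA : s * A ^ 2 ≤ ε := by
      rw [hs, div_mul_eq_mul_div, div_le_iff₀ (by positivity)]
      nlinarith [sq_nonneg A]
    have h2 : (4 * A + s) * A * A ≤ 4 * A ^ 3 + ε := by nlinarith
    calc (∫ x in (0:ℝ)..1, ‖u x‖ ^ 4) ≤ ((4 * A + s) * A + B / (4 * A + s)) * A :=
          step3 _ ht
      _ ≤ (1/4) * B + 4 * A ^ 3 + ε := by ring_nf; ring_nf at h1 h2 ⊢; nlinarith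
  calc (∫ x in (0:ℝ)..1, ‖u x‖ ^ 4) ≤ (1/4) * B + 4 * A ^ 3 := final
    _ = 1 / 4 * B + (8:ℝ) / 2 * A ^ 3 := by norm_num
end

section
/- For every admissible function u : [0,1] → ℂ (continuously differentiable with u(0) = u(1) = 0), one has the one-dimensional interpolation inequality ∫₀¹ |u(x)|⁶ dx ≤ 4 (∫₀¹ |u'(x)|² dx) (∫₀¹ |u(x)|² dx)². -/
open MeasureTheory intervalIntegral

/-- Cauchy–Schwarz for interval integrals of continuous functions. -/
lemma cs_aux {f g : ℝ → ℝ} (hf : ContinuousOn f (Set.Icc (0:ℝ) 1))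
    (hg : ContinuousOn g (Set.Icc (0:ℝ) 1)) :
    (∫ x in (0:ℝ)..1, f x * g x) ^ 2
      ≤ (∫ x in (0:ℝ)..1, f x ^ 2) * (∫ x in (0:ℝ)..1, g x ^ 2) := by
  have h01 : (0:ℝ) ≤ 1 := zero_le_one
  have hIcc : Set.uIcc (0:ℝ) 1 = Set.Icc 0 1 := by
    rw [Set.uIcc_of_le h01]
  have hf2 : IntervalIntegrable (fun x => f x ^ 2) volume 0 1 :=
    ContinuousOn.intervalIntegrable (by rw [hIcc]; exact hf.pow 2)
  have hg2 : IntervalIntegrable (fun x => g x ^ 2) volume 0 1 :=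
    ContinuousOn.intervalIntegrable (by rw [hIcc]; exact hg.pow 2)
  have hfg : IntervalIntegrable (fun x => f x * g x) volume 0 1 :=
    ContinuousOn.intervalIntegrable (by rw [hIcc]; exact hf.mul hg)
  set F := ∫ x in (0:ℝ)..1, f x ^ 2
  set G := ∫ x in (0:ℝ)..1, g x ^ 2
  set I := ∫ x in (0:ℝ)..1, f x * g x
  have key : ∀ t : ℝ, 0 ≤ F * (t * t) + (2 * I) * t + G := by
    intro t
    have expand : F * (t * t) + (2 * I) * t + G
        = ∫ x in (0:ℝ)..1, (t * f x + g x) ^ 2 := by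
      have : (fun x => (t * f x + g x) ^ 2)
          = fun x => t ^ 2 * f x ^ 2 + (2 * t * (f x * g x) + g x ^ 2) := by
        funext x; ring
      rw [this, intervalIntegral.integral_add ((hf2.const_mul _))
          (((hfg.const_mul _)).add hg2),
        intervalIntegral.integral_add (hfg.const_mul _) hg2,
        intervalIntegral.integral_const_mul, intervalIntegral.integral_const_mul]
      ring
    rw [expand]
    apply intervalIntegral.integral_nonneg h01
    intro x _
    positivity
  have hd := discrim_le_zero key
  rw [discrim] at hd
  nlinarith [hd]

/-- One-dimensional Gagliardo–Nirenberg interpolation: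
`‖u‖₆⁶ ≤ 4 ‖u'‖₂² (‖u‖₂²)²` for all admissible `u`. -/
theorem L6_interpolation (u u' : ℝ → ℂ) (hu : Admissible u u') :
    (∫ x in (0:ℝ)..1, ‖u x‖ ^ 6)
      ≤ 4 * (∫ x in (0:ℝ)..1, ‖u' x‖ ^ 2) * (∫ x in (0:ℝ)..1, ‖u x‖ ^ 2) ^ 2 := by
  obtain ⟨hderiv, hc', h0, h1⟩ := hu
  have h01 : (0:ℝ) ≤ 1 := zero_le_one
  have hIcc : Set.uIcc (0:ℝ) 1 = Set.Icc 0 1 := Set.uIcc_of_le h01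
  have hcu : ContinuousOn u (Set.Icc (0:ℝ) 1) := fun x hx =>
    (hderiv x hx).continuousAt.continuousWithinAt
  have hnu : ContinuousOn (fun x => ‖u x‖) (Set.Icc (0:ℝ) 1) := hcu.norm
  have hnu' : ContinuousOn (fun x => ‖u' x‖) (Set.Icc (0:ℝ) 1) := hc'.norm
  set A := ∫ x in (0:ℝ)..1, ‖u' x‖ ^ 2 with hA
  set B := ∫ x in (0:ℝ)..1, ‖u x‖ ^ 2 with hB
  set S := ∫ x in (0:ℝ)..1, ‖u x‖ * ‖u' x‖ with hS
  have hSnonneg : 0 ≤ S := by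
    apply intervalIntegral.integral_nonneg h01
    intro x _; positivity
  have hBnonneg : 0 ≤ B := by
    apply intervalIntegral.integral_nonneg h01
    intro x _; positivity
  -- pointwise bound ‖u x‖ ^ 2 ≤ 2 * S on [0,1]
  have hpt : ∀ x ∈ Set.Icc (0:ℝ) 1, ‖u x‖ ^ 2 ≤ 2 * S := by
    intro x hx
    -- derivative of t ↦ ⟪u t, u t⟫_ℝ
    have hD : ∀ t ∈ Set.Icc (0:ℝ) 1,
        HasDerivAt (fun t => (inner ℝ (u t) (u t) : ℝ))
          (inner ℝ (u t) (u' t) + inner ℝ (u' t) (u t)) t := by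
      intro t ht
      exact (hderiv t ht).inner ℝ (hderiv t ht)
    have hDcont : ContinuousOn
        (fun t => (inner ℝ (u t) (u' t) : ℝ) + inner ℝ (u' t) (u t)) (Set.Icc (0:ℝ) 1) := by
      exact ((hcu.inner hc')).add (hc'.inner hcu)
    have hsub : Set.uIcc (0:ℝ) x ⊆ Set.Icc 0 1 := by
      rw [Set.uIcc_of_le hx.1]
      exact Set.Icc_subset_Icc le_rfl hx.2
    have hInt : IntervalIntegrable
        (fun t => (inner ℝ (u t) (u' t) : ℝ) + inner ℝ (u' t) (u t)) volume 0 x :=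
      (hDcont.mono hsub).intervalIntegrable
    have hftc := intervalIntegral.integral_eq_sub_of_hasDerivAt
      (f := fun t => (inner ℝ (u t) (u t) : ℝ))
      (fun t ht => hD t (hsub ht)) hInt
    have hval : ‖u x‖ ^ 2
        = ∫ t in (0:ℝ)..x, ((inner ℝ (u t) (u' t) : ℝ) + inner ℝ (u' t) (u t)) := by
      rw [hftc]; simp [real_inner_self_eq_norm_sq, h0]
    rw [hval]
    -- bound the integral by ∫₀¹ 2‖u‖‖u'‖ = 2S
    have hS2 : (2:ℝ) * S = ∫ t in (0:ℝ)..1, 2 * (‖u t‖ * ‖u' t‖) := by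
      rw [intervalIntegral.integral_const_mul]
    rw [hS2]
    have hcc : ContinuousOn (fun t => 2 * (‖u t‖ * ‖u' t‖)) (Set.Icc (0:ℝ) 1) :=
      continuousOn_const.mul (hnu.mul hnu')
    have h2int : IntervalIntegrable (fun t => 2 * (‖u t‖ * ‖u' t‖)) volume 0 1 :=
      ContinuousOn.intervalIntegrable (by rw [hIcc]; exact hcc)
    have hstep1 : (∫ t in (0:ℝ)..x, (inner ℝ (u t) (u' t) : ℝ) + inner ℝ (u' t) (u t))
        ≤ ∫ t in (0:ℝ)..x, 2 * (‖u t‖ * ‖u' t‖) := by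
      apply intervalIntegral.integral_mono_on hx.1 hInt
        (h2int.mono_set (by rw [hIcc, Set.uIcc_of_le hx.1]; exact Set.Icc_subset_Icc le_rfl hx.2))
      intro t ht
      have ht' : t ∈ Set.Icc (0:ℝ) 1 := ⟨ht.1, le_trans ht.2 hx.2⟩
      have h1' : (inner ℝ (u' t) (u t) : ℝ) ≤ ‖u' t‖ * ‖u t‖ := real_inner_le_norm _ _
      have h2' : (inner ℝ (u t) (u' t) : ℝ) ≤ ‖u t‖ * ‖u' t‖ := real_inner_le_norm _ _
      nlinarith [h1', h2']
    have hstep2 : (∫ t in (0:ℝ)..x, 2 * (‖u t‖ * ‖u' t‖))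
        ≤ ∫ t in (0:ℝ)..1, 2 * (‖u t‖ * ‖u' t‖) := by
      apply intervalIntegral.integral_mono_interval le_rfl hx.1 hx.2 _ h2int
      filter_upwards with t
      simp only [Pi.zero_apply]
      positivity
    linarith
  -- Cauchy–Schwarz : S ^ 2 ≤ B * A
  have hCS : S ^ 2 ≤ B * A := cs_aux hnu hnu'
  -- main estimate
  have hmono : (∫ x in (0:ℝ)..1, ‖u x‖ ^ 6)
      ≤ ∫ x in (0:ℝ)..1, (2 * S) ^ 2 * ‖u x‖ ^ 2 := by
    apply intervalIntegral.integral_mono_on h01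
    · exact ContinuousOn.intervalIntegrable (by rw [hIcc]; exact hnu.pow 6)
    · exact ContinuousOn.intervalIntegrable
        (by rw [hIcc]; exact continuousOn_const.mul (hnu.pow 2))
    · intro x hx
      have h := hpt x hx
      have hn : (0:ℝ) ≤ ‖u x‖ ^ 2 := by positivity
      calc ‖u x‖ ^ 6 = (‖u x‖ ^ 2) ^ 2 * ‖u x‖ ^ 2 := by ring
        _ ≤ (2 * S) ^ 2 * ‖u x‖ ^ 2 := by
            nlinarith [mul_le_mul h h hn (hn.trans h), hn]
  have heq : (∫ x in (0:ℝ)..1, (2 * S) ^ 2 * ‖u x‖ ^ 2) = (2 * S) ^ 2 * B := by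
    rw [intervalIntegral.integral_const_mul]
  rw [heq] at hmono
  have : (2 * S) ^ 2 * B ≤ 4 * A * B ^ 2 := by nlinarith
  linarith
end

section
/- There exists a constant κ₂ > 0 such that for all admissible u₁, u₂ : [0,1] → ℂ one has the cross-term bound |Re ∫₀¹ u₁(x) u₂(x) (conj(u₁(x)) − conj(u₂(x)))² dx| ≤ (1/2) κ₂ (Φ(u₁) + Φ(u₂)) ∫₀¹ |u₁(x) − u₂(x)|² dx. -/
open MeasureTheory intervalIntegral

noncomputable def Phi (κ : ℝ) (u u' : ℝ → ℂ) : ℝ :=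
  (∫ x in (0:ℝ)..1, ‖u' x‖ ^ 2) - (1 / 2) * (∫ x in (0:ℝ)..1, ‖u x‖ ^ 4)
    + κ * (∫ x in (0:ℝ)..1, ‖u x‖ ^ 2) ^ 3 + κ * (∫ x in (0:ℝ)..1, ‖u x‖ ^ 2) ^ 9

lemma adm_cont {u u' : ℝ → ℂ} (h : Admissible u u') : ContinuousOn u (Set.Icc 0 1) :=
  fun x hx => ((h.1 x hx).continuousAt).continuousWithinAt

-- A := ∫₀¹ ‖u'‖ satisfies A² ≤ D := ∫₀¹ ‖u'‖²
lemma A_sq_le_D {u u' : ℝ → ℂ} (h : Admissible u u') :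
    (∫ t in (0:ℝ)..1, ‖u' t‖) ^ 2 ≤ ∫ t in (0:ℝ)..1, ‖u' t‖ ^ 2 := by
  have huIcc : Set.uIcc (0:ℝ) 1 = Set.Icc 0 1 := Set.uIcc_of_le zero_le_one
  set A := ∫ t in (0:ℝ)..1, ‖u' t‖ with hA
  set D := ∫ t in (0:ℝ)..1, ‖u' t‖ ^ 2 with hD
  have hcont : ContinuousOn (fun t => ‖u' t‖) (Set.Icc 0 1) := h.2.1.norm
  have hint1 : IntervalIntegrable (fun t => ‖u' t‖) volume 0 1 :=
    (huIcc ▸ hcont).intervalIntegrable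
  have hint2 : IntervalIntegrable (fun t => ‖u' t‖ ^ 2) volume 0 1 :=
    (huIcc ▸ (hcont.pow 2)).intervalIntegrable
  have hAnn : 0 ≤ A := intervalIntegral.integral_nonneg (by norm_num) (fun t _ => norm_nonneg _)
  have hDnn : 0 ≤ D := intervalIntegral.integral_nonneg (by norm_num)
    (fun t _ => by positivity)
  have key : ∀ c : ℝ, 0 < c → A ≤ (c + D / c) / 2 := by
    intro c hc
    have hcmono : A ≤ ∫ t in (0:ℝ)..1, (c + ‖u' t‖ ^ 2 / c) / 2 := by
      apply intervalIntegral.integral_mono_on (by norm_num) hint1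
      · exact (huIcc ▸ ((continuousOn_const.add ((hcont.pow 2).div_const c)).div_const 2)).intervalIntegrable
      · intro t _
        have heq : (c + ‖u' t‖ ^ 2 / c) / 2 - ‖u' t‖ = (c - ‖u' t‖) ^ 2 / (2 * c) := by
          field_simp; ring
        have hnn : 0 ≤ (c - ‖u' t‖) ^ 2 / (2 * c) := by positivity
        linarith [heq ▸ hnn]
    have heq2 : (∫ t in (0:ℝ)..1, (c + ‖u' t‖ ^ 2 / c) / 2) = (c + D / c) / 2 := by
      have : (fun t => (c + ‖u' t‖ ^ 2 / c) / 2)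
          = (fun t => c / 2 + (1 / (2 * c)) * ‖u' t‖ ^ 2) := by
        funext t; field_simp
      rw [this, intervalIntegral.integral_add intervalIntegrable_const (hint2.const_mul _),
        intervalIntegral.integral_const, intervalIntegral.integral_const_mul]
      simp only [smul_eq_mul, ← hD]
      field_simp
      ring
    linarith [heq2 ▸ hcmono]
  rcases eq_or_lt_of_le hDnn with hD0 | hD0
  · have hA0 : A ≤ 0 := by
      refine le_of_forall_pos_le_add ?_
      intro ε hε
      have hk := key (ε / 2) (by positivity)
      rw [← hD0] at hk
      simp only [zero_div, add_zero] at hk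
      linarith
    nlinarith
  · have hc := key (Real.sqrt D) (Real.sqrt_pos.mpr hD0)
    have hs : Real.sqrt D ^ 2 = D := Real.sq_sqrt hDnn
    have hsp : 0 < Real.sqrt D := Real.sqrt_pos.mpr hD0
    have hAs : A ≤ Real.sqrt D := by
      rw [Real.div_sqrt] at hc; linarith
    nlinarith

lemma sup_bound {u u' : ℝ → ℂ} (h : Admissible u u') {x : ℝ} (hx : x ∈ Set.Icc (0:ℝ) 1) :
    ‖u x‖ ≤ ∫ t in (0:ℝ)..1, ‖u' t‖ := by
  obtain ⟨hx0, hx1⟩ := hx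
  have hsub : Set.uIcc (0:ℝ) x ⊆ Set.Icc 0 1 := by
    rw [Set.uIcc_of_le hx0]; exact Set.Icc_subset_Icc le_rfl hx1
  have hint : IntervalIntegrable u' volume 0 x :=
    (h.2.1.mono hsub).intervalIntegrable
  have hftc : (∫ t in (0:ℝ)..x, u' t) = u x - u 0 :=
    intervalIntegral.integral_eq_sub_of_hasDerivAt (fun t ht => h.1 t (hsub ht)) hint
  rw [h.2.2.1, sub_zero] at hftc
  have hcont : ContinuousOn (fun t => ‖u' t‖) (Set.Icc 0 1) := h.2.1.norm
  calc ‖u x‖ = ‖∫ t in (0:ℝ)..x, u' t‖ := by rw [hftc]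
    _ ≤ ∫ t in (0:ℝ)..x, ‖u' t‖ := intervalIntegral.norm_integral_le_integral_norm hx0
    _ ≤ ∫ t in (0:ℝ)..1, ‖u' t‖ := by
        apply intervalIntegral.integral_mono_interval le_rfl hx0 hx1
        · exact Filter.Eventually.of_forall (fun t => norm_nonneg _)
        · have huIcc : Set.uIcc (0:ℝ) 1 = Set.Icc 0 1 := Set.uIcc_of_le zero_le_one
          exact (huIcc ▸ hcont).intervalIntegrable

/-- Cross-term bound: there is `κ₂ > 0` so that for all admissible `u₁, u₂`,
`|Re ∫ u₁ u₂ (conj u₁ − conj u₂)²| ≤ (1/2) κ₂ (Φ(u₁) + Φ(u₂)) ∫ |u₁ − u₂|²`. -/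
theorem cross_term_bound (κ : ℝ) (hκ : 0 < κ)
    (hGN : ∀ u u' : ℝ → ℂ, Admissible u u' →
      (∫ x in (0:ℝ)..1, ‖u x‖ ^ 4) ≤
        (1 / 4) * (∫ x in (0:ℝ)..1, ‖u' x‖ ^ 2) +
          (κ / 2) * (∫ x in (0:ℝ)..1, ‖u x‖ ^ 2) ^ 3) :
    ∃ κ₂ : ℝ, 0 < κ₂ ∧
      ∀ u₁ u₁' u₂ u₂' : ℝ → ℂ, Admissible u₁ u₁' → Admissible u₂ u₂' →
        |(∫ x in (0:ℝ)..1,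
            u₁ x * u₂ x * ((starRingEnd ℂ) (u₁ x) - (starRingEnd ℂ) (u₂ x)) ^ 2).re|
          ≤ (1 / 2) * κ₂ * (Phi κ u₁ u₁' + Phi κ u₂ u₂') *
              (∫ x in (0:ℝ)..1, ‖u₁ x - u₂ x‖ ^ 2) := by
  refine ⟨2, by norm_num, ?_⟩
  intro u₁ u₁' u₂ u₂' h1 h2
  -- Φ ≥ (1/2) D
  have phi_ge : ∀ u u' : ℝ → ℂ, Admissible u u' →
      (1/2) * (∫ x in (0:ℝ)..1, ‖u' x‖ ^ 2) ≤ Phi κ u u' := by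
    intro u u' h
    have hGNu := hGN u u' h
    have hM : 0 ≤ ∫ x in (0:ℝ)..1, ‖u x‖ ^ 2 :=
      intervalIntegral.integral_nonneg (by norm_num) (fun t _ => by positivity)
    have hDnn : 0 ≤ ∫ x in (0:ℝ)..1, ‖u' x‖ ^ 2 :=
      intervalIntegral.integral_nonneg (by norm_num) (fun t _ => by positivity)
    unfold Phi
    nlinarith [mul_nonneg hκ.le (pow_nonneg hM 3), mul_nonneg hκ.le (pow_nonneg hM 9)]
  have huIcc : Set.uIcc (0:ℝ) 1 = Set.Icc 0 1 := Set.uIcc_of_le zero_le_one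
  set A₁ := ∫ t in (0:ℝ)..1, ‖u₁' t‖ with hA1
  set A₂ := ∫ t in (0:ℝ)..1, ‖u₂' t‖ with hA2
  have hA1nn : 0 ≤ A₁ :=
    intervalIntegral.integral_nonneg (by norm_num) (fun t _ => norm_nonneg _)
  have hA2nn : 0 ≤ A₂ :=
    intervalIntegral.integral_nonneg (by norm_num) (fun t _ => norm_nonneg _)
  have hc1 : ContinuousOn u₁ (Set.Icc 0 1) := adm_cont h1
  have hc2 : ContinuousOn u₂ (Set.Icc 0 1) := adm_cont h2
  set f := fun x => u₁ x * u₂ x * ((starRingEnd ℂ) (u₁ x) - (starRingEnd ℂ) (u₂ x)) ^ 2 with hf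
  have hfc : ContinuousOn f (Set.Icc 0 1) := by
    apply ((hc1.mul hc2).mul _)
    exact ((hc1.star.sub hc2.star).pow 2)
  have hΔc : ContinuousOn (fun x => ‖u₁ x - u₂ x‖ ^ 2) (Set.Icc 0 1) :=
    ((hc1.sub hc2).norm.pow 2)
  have hInn : 0 ≤ ∫ x in (0:ℝ)..1, ‖u₁ x - u₂ x‖ ^ 2 :=
    intervalIntegral.integral_nonneg (by norm_num) (fun t _ => by positivity)
  have hnormf : ∀ x ∈ Set.Icc (0:ℝ) 1, ‖f x‖ ≤ A₁ * A₂ * ‖u₁ x - u₂ x‖ ^ 2 := by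
    intro x hx
    have hfx : ‖f x‖ = ‖u₁ x‖ * ‖u₂ x‖ * ‖u₁ x - u₂ x‖ ^ 2 := by
      have : (starRingEnd ℂ) (u₁ x) - (starRingEnd ℂ) (u₂ x)
          = (starRingEnd ℂ) (u₁ x - u₂ x) := by rw [map_sub]
      rw [hf]; simp only [this, norm_mul, norm_pow, RCLike.norm_conj]
    rw [hfx]
    have h1b := sup_bound h1 hx
    have h2b := sup_bound h2 hx
    have hm : ‖u₁ x‖ * ‖u₂ x‖ ≤ A₁ * A₂ :=
      mul_le_mul h1b h2b (norm_nonneg _) hA1nn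
    exact mul_le_mul_of_nonneg_right hm (sq_nonneg _)
  have step1 : |(∫ x in (0:ℝ)..1, f x).re| ≤ ∫ x in (0:ℝ)..1, ‖f x‖ := by
    have h₁ : |(∫ x in (0:ℝ)..1, f x).re| ≤ ‖∫ x in (0:ℝ)..1, f x‖ := by
      exact Complex.abs_re_le_norm _
    exact h₁.trans (intervalIntegral.norm_integral_le_integral_norm zero_le_one)
  have step2 : (∫ x in (0:ℝ)..1, ‖f x‖)
      ≤ ∫ x in (0:ℝ)..1, A₁ * A₂ * ‖u₁ x - u₂ x‖ ^ 2 := by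
    apply intervalIntegral.integral_mono_on zero_le_one
    · exact (huIcc ▸ hfc.norm).intervalIntegrable
    · exact (huIcc ▸ (hΔc.const_smul (A₁ * A₂))).intervalIntegrable
    · exact hnormf
  have step3 : (∫ x in (0:ℝ)..1, A₁ * A₂ * ‖u₁ x - u₂ x‖ ^ 2)
      = A₁ * A₂ * ∫ x in (0:ℝ)..1, ‖u₁ x - u₂ x‖ ^ 2 :=
    intervalIntegral.integral_const_mul _ _
  have hprod : A₁ * A₂ ≤ Phi κ u₁ u₁' + Phi κ u₂ u₂' := by
    nlinarith [A_sq_le_D h1, A_sq_le_D h2, phi_ge u₁ u₁' h1, phi_ge u₂ u₂' h2,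
      sq_nonneg (A₁ - A₂)]
  calc |(∫ x in (0:ℝ)..1, f x).re| ≤ A₁ * A₂ * ∫ x in (0:ℝ)..1, ‖u₁ x - u₂ x‖ ^ 2 := by
        rw [← step3]; exact le_trans step1 step2
    _ ≤ (Phi κ u₁ u₁' + Phi κ u₂ u₂') * ∫ x in (0:ℝ)..1, ‖u₁ x - u₂ x‖ ^ 2 :=
        mul_le_mul_of_nonneg_right hprod hInn
    _ = (1 / 2) * 2 * (Phi κ u₁ u₁' + Phi κ u₂ u₂') *
          (∫ x in (0:ℝ)..1, ‖u₁ x - u₂ x‖ ^ 2) := by ring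
end

section
/- Let H be a normed vector space equipped with its Borel σ-algebra, ξ > 0, and define d₀(u,v) = min(‖u − v‖, 1) and d₀^ξ(u,v) = √( d₀(u,v) · (1 + e^{ξ‖u‖²} + e^{ξ‖v‖²}) ). Then for all Borel probability measures μ, ν on H, the Wasserstein-type quantities (defined as infima of ∫ d dπ over couplings π of (μ,ν), with values in [0,∞]) satisfy W_{d₀^ξ}(μ, ν)² ≤ W_{d₀}(μ, ν) · (1 + ∫_H e^{ξ‖u‖²} μ(du) + ∫_H e^{ξ‖u‖²} ν(du)). -/
open MeasureTheory ENNReal NNReal EMetric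

/-- The Wasserstein-type distance associated with a cost `c : H × H → ℝ`:
the infimum over couplings `π` of `(μ, ν)` of `∫ c dπ`, valued in `[0,∞]`. -/
noncomputable def wassersteinCost {H : Type*} [MeasurableSpace H]
    (c : H × H → ℝ) (μ ν : Measure H) : ENNReal :=
  ⨅ π : {π : Measure (H × H) //
      IsProbabilityMeasure π ∧ π.map Prod.fst = μ ∧ π.map Prod.snd = ν},
    ∫⁻ p, ENNReal.ofReal (c p) ∂π.val

section Aux

variable {H : Type*} [NormedAddCommGroup H] [MeasurableSpace H] [BorelSpace H]

/-- Lipschitz-type estimate for the thickened indicator against the truncated distance. -/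
lemma tIAux_lip {δ : ℝ} (hδ : 0 < δ) (F : Set H) (x y : H) :
    thickenedIndicatorAux δ F x ≤ thickenedIndicatorAux δ F y +
      ((ENNReal.ofReal δ)⁻¹ + 1) * ENNReal.ofReal (min ‖x - y‖ 1) := by
  rcases le_total ‖x - y‖ 1 with h1 | h1
  · rw [min_eq_left h1]
    have key : thickenedIndicatorAux δ F x ≤ thickenedIndicatorAux δ F y +
        edist x y / ENNReal.ofReal δ := by
      unfold thickenedIndicatorAux
      rw [tsub_le_iff_right]
      calc (1 : ℝ≥0∞) ≤ 1 - infEdist y F / ENNReal.ofReal δ + infEdist y F / ENNReal.ofReal δ :=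
            le_tsub_add
        _ ≤ 1 - infEdist y F / ENNReal.ofReal δ +
            (infEdist x F / ENNReal.ofReal δ + edist x y / ENNReal.ofReal δ) := by
            gcongr
            rw [← ENNReal.add_div]
            refine ENNReal.div_le_div_right ?_ _
            rw [edist_comm]
            exact Metric.infEDist_le_infEDist_add_edist (x := y) (y := x) (s := F)
        _ = 1 - infEdist y F / ENNReal.ofReal δ + edist x y / ENNReal.ofReal δ +
            infEdist x F / ENNReal.ofReal δ := by ring
    refine key.trans ?_
    gcongr
    rw [div_eq_mul_inv, mul_comm, edist_dist, dist_eq_norm]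
    exact mul_le_mul_left le_self_add _
  · have h2 : (1:ℝ≥0∞) ≤ ((ENNReal.ofReal δ)⁻¹ + 1) * ENNReal.ofReal (min ‖x - y‖ 1) := by
      rw [min_eq_right h1]
      simpa using mul_le_mul' (le_add_self (a := 1) (b := (ENNReal.ofReal δ)⁻¹)) le_rfl
    calc thickenedIndicatorAux δ F x ≤ 1 := thickenedIndicatorAux_le_one δ F x
      _ ≤ _ := le_add_left h2

lemma lint_tIAux_le {δ : ℝ} (hδ : 0 < δ) (F : Set H) (μ ν : Measure H)
    [IsProbabilityMeasure μ] [IsProbabilityMeasure ν]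
    (h : ∀ ε : ℝ≥0∞, 0 < ε → ∃ π : Measure (H × H), IsProbabilityMeasure π ∧
      π.map Prod.fst = μ ∧ π.map Prod.snd = ν ∧
      ∫⁻ p, ENNReal.ofReal (min ‖p.1 - p.2‖ 1) ∂π < ε) :
    ∫⁻ x, thickenedIndicatorAux δ F x ∂μ ≤ ∫⁻ x, thickenedIndicatorAux δ F x ∂ν := by
  have tmeas : Measurable (thickenedIndicatorAux δ F) :=
    (continuous_thickenedIndicatorAux hδ F).measurable
  set K : ℝ≥0∞ := (ENNReal.ofReal δ)⁻¹ + 1 with hK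
  have hKtop : K ≠ ⊤ := by
    simp [hK, ENNReal.inv_ne_top.2 (ENNReal.ofReal_pos.2 hδ).ne']
  refine ENNReal.le_of_forall_pos_le_add fun ε hε _ => ?_
  obtain ⟨π, hπp, hπ1, hπ2, hπc⟩ := h ((ε : ℝ≥0∞) / K)
    (ENNReal.div_pos (by exact_mod_cast hε.ne') hKtop)
  calc ∫⁻ x, thickenedIndicatorAux δ F x ∂μ
      = ∫⁻ p, thickenedIndicatorAux δ F p.1 ∂π := by
        rw [← hπ1, lintegral_map tmeas measurable_fst]
    _ ≤ ∫⁻ p, (thickenedIndicatorAux δ F p.2 +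
          K * ENNReal.ofReal (min ‖p.1 - p.2‖ 1)) ∂π :=
        lintegral_mono fun p => tIAux_lip hδ F p.1 p.2
    _ = ∫⁻ p, thickenedIndicatorAux δ F p.2 ∂π +
          ∫⁻ p, K * ENNReal.ofReal (min ‖p.1 - p.2‖ 1) ∂π :=
        lintegral_add_left
          (show Measurable fun p : H × H => thickenedIndicatorAux δ F p.2 from
            tmeas.comp measurable_snd) _
    _ = ∫⁻ p, thickenedIndicatorAux δ F p.2 ∂π +
          K * ∫⁻ p, ENNReal.ofReal (min ‖p.1 - p.2‖ 1) ∂π := by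
        rw [lintegral_const_mul' K _ hKtop]
    _ ≤ ∫⁻ x, thickenedIndicatorAux δ F x ∂ν + K * ((ε : ℝ≥0∞) / K) := by
        rw [← hπ2, lintegral_map tmeas measurable_snd]
        exact add_le_add_right (mul_le_mul_right hπc.le K) _
    _ ≤ ∫⁻ x, thickenedIndicatorAux δ F x ∂ν + ε := by
        gcongr
        exact ENNReal.mul_div_le

/-- If the `d₀`-Wasserstein distance vanishes, the measures coincide. -/
lemma eq_of_wasserstein_zero (μ ν : Measure H)
    [IsProbabilityMeasure μ] [IsProbabilityMeasure ν]
    (hW : wassersteinCost (fun p : H × H => min ‖p.1 - p.2‖ 1) μ ν = 0) : μ = ν := by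
  have hsym : ∀ ε : ℝ≥0∞, 0 < ε → ∃ π : Measure (H × H), IsProbabilityMeasure π ∧
      π.map Prod.fst = μ ∧ π.map Prod.snd = ν ∧
      ∫⁻ p, ENNReal.ofReal (min ‖p.1 - p.2‖ 1) ∂π < ε := by
    intro ε hε
    have h : wassersteinCost (fun p : H × H => min ‖p.1 - p.2‖ 1) μ ν < ε := hW ▸ hε
    rw [wassersteinCost, iInf_lt_iff] at h
    obtain ⟨⟨π, hp, h1, h2⟩, hlt⟩ := h
    exact ⟨π, hp, h1, h2, hlt⟩
  have hsym' : ∀ ε : ℝ≥0∞, 0 < ε → ∃ π : Measure (H × H), IsProbabilityMeasure π ∧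
      π.map Prod.fst = ν ∧ π.map Prod.snd = μ ∧
      ∫⁻ p, ENNReal.ofReal (min ‖p.1 - p.2‖ 1) ∂π < ε := by
    intro ε hε
    obtain ⟨π, hp, h1, h2, hc⟩ := hsym ε hε
    refine ⟨π.map Prod.swap, Measure.isProbabilityMeasure_map measurable_swap.aemeasurable, ?_, ?_, ?_⟩
    · rw [Measure.map_map measurable_fst measurable_swap]; exact h2
    · rw [Measure.map_map measurable_snd measurable_swap]; exact h1
    · refine lt_of_le_of_lt (lintegral_map_le _ Prod.swap) ?_
      have hswap : (fun p : H × H => ENNReal.ofReal (min ‖(Prod.swap p).1 - (Prod.swap p).2‖ 1))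
          = fun p : H × H => ENNReal.ofReal (min ‖p.1 - p.2‖ 1) := by
        funext p
        rw [show (Prod.swap p).1 = p.2 from rfl, show (Prod.swap p).2 = p.1 from rfl,
          norm_sub_rev]
      calc ∫⁻ p, ENNReal.ofReal (min ‖(Prod.swap p).1 - (Prod.swap p).2‖ 1) ∂π
          = ∫⁻ p, ENNReal.ofReal (min ‖p.1 - p.2‖ 1) ∂π := by rw [hswap]
        _ < ε := hc
  have key : ∀ F : Set H, IsClosed F → μ F = ν F := by
    intro F hF
    have δpos : ∀ n : ℕ, 0 < ((n : ℝ) + 1)⁻¹ := fun n => by positivity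
    have δlim : Filter.Tendsto (fun n : ℕ => ((n : ℝ) + 1)⁻¹) Filter.atTop (nhds 0) :=
      tendsto_one_div_add_atTop_nhds_zero_nat.congr (fun n => by rw [one_div])
    have hμ := tendsto_lintegral_thickenedIndicator_of_isClosed μ hF δpos δlim
    have hν := tendsto_lintegral_thickenedIndicator_of_isClosed ν hF δpos δlim
    have coeeq : ∀ (n : ℕ) (x : H),
        ((thickenedIndicator (δpos n) F x : ℝ≥0) : ℝ≥0∞) =
          thickenedIndicatorAux ((n : ℝ) + 1)⁻¹ F x := by
      intro n x
      rw [thickenedIndicator.coeFn_eq_comp]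
      exact ENNReal.coe_toNNReal thickenedIndicatorAux_lt_top.ne
    have heq : (fun n : ℕ => ∫⁻ x, ((thickenedIndicator (δpos n) F x : ℝ≥0) : ℝ≥0∞) ∂μ) =
        fun n : ℕ => ∫⁻ x, ((thickenedIndicator (δpos n) F x : ℝ≥0) : ℝ≥0∞) ∂ν := by
      funext n
      simp_rw [coeeq n]
      exact le_antisymm (lint_tIAux_le (δpos n) F μ ν hsym) (lint_tIAux_le (δpos n) F ν μ hsym')
    rw [heq] at hμ
    exact tendsto_nhds_unique hμ hν
  refine ext_of_generate_finite {s : Set H | IsClosed s} ?_ ?_ (fun s hs => key s hs) ?_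
  · rw [BorelSpace.measurable_eq (α := H), borel_eq_generateFrom_isClosed]
  · exact fun s hs t ht _ => hs.inter ht
  · simp [key Set.univ isClosed_univ]

end Aux

/-- Cauchy–Schwarz upgrade of Wasserstein distances: with
`d₀(u,v) = min(‖u−v‖,1)` and
`d₀^ξ(u,v) = √(d₀(u,v)(1 + e^{ξ‖u‖²} + e^{ξ‖v‖²}))`, one has
`W_{d₀^ξ}(μ,ν)² ≤ W_{d₀}(μ,ν) (1 + ∫ e^{ξ‖u‖²} dμ + ∫ e^{ξ‖u‖²} dν)`. -/
theorem wasserstein_d0xi_le {H : Type*} [NormedAddCommGroup H]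
    [MeasurableSpace H] [BorelSpace H] (ξ : ℝ) (hξ : 0 < ξ)
    (μ ν : Measure H) [IsProbabilityMeasure μ] [IsProbabilityMeasure ν] :
    (wassersteinCost
        (fun p : H × H => Real.sqrt (min ‖p.1 - p.2‖ 1 *
          (1 + Real.exp (ξ * ‖p.1‖ ^ 2) + Real.exp (ξ * ‖p.2‖ ^ 2)))) μ ν) ^ 2
      ≤ wassersteinCost (fun p : H × H => min ‖p.1 - p.2‖ 1) μ ν *
          (1 + (∫⁻ u, ENNReal.ofReal (Real.exp (ξ * ‖u‖ ^ 2)) ∂μ)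
            + ∫⁻ u, ENNReal.ofReal (Real.exp (ξ * ‖u‖ ^ 2)) ∂ν) := by
  classical
  set C : ENNReal := 1 + (∫⁻ u, ENNReal.ofReal (Real.exp (ξ * ‖u‖ ^ 2)) ∂μ)
      + ∫⁻ u, ENNReal.ofReal (Real.exp (ξ * ‖u‖ ^ 2)) ∂ν with hC
  have Emeas : Measurable fun u : H => ENNReal.ofReal (Real.exp (ξ * ‖u‖ ^ 2)) :=
    (ENNReal.continuous_ofReal.comp (Real.continuous_exp.comp
      (continuous_const.mul (continuous_norm.pow 2)))).measurable
  have hsplit : ∀ p : H × H, ENNReal.ofReal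
      (1 + Real.exp (ξ * ‖p.1‖ ^ 2) + Real.exp (ξ * ‖p.2‖ ^ 2)) =
      1 + ENNReal.ofReal (Real.exp (ξ * ‖p.1‖ ^ 2))
        + ENNReal.ofReal (Real.exp (ξ * ‖p.2‖ ^ 2)) := by
    intro p
    rw [ENNReal.ofReal_add (by positivity) (Real.exp_pos _).le,
      ENNReal.ofReal_add zero_le_one (Real.exp_pos _).le, ENNReal.ofReal_one]
  have gmeas : Measurable fun p : H × H => ENNReal.ofReal
      (1 + Real.exp (ξ * ‖p.1‖ ^ 2) + Real.exp (ξ * ‖p.2‖ ^ 2)) := by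
    have : (fun p : H × H => ENNReal.ofReal
        (1 + Real.exp (ξ * ‖p.1‖ ^ 2) + Real.exp (ξ * ‖p.2‖ ^ 2))) =
        fun p : H × H => 1 + ENNReal.ofReal (Real.exp (ξ * ‖p.1‖ ^ 2))
          + ENNReal.ofReal (Real.exp (ξ * ‖p.2‖ ^ 2)) := funext hsplit
    rw [this]
    exact (measurable_const.add (Emeas.comp measurable_fst)).add (Emeas.comp measurable_snd)
  -- integral of g along any coupling equals C
  have hgint : ∀ π : Measure (H × H), IsProbabilityMeasure π → π.map Prod.fst = μ →
      π.map Prod.snd = ν →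
      ∫⁻ p, ENNReal.ofReal
        (1 + Real.exp (ξ * ‖p.1‖ ^ 2) + Real.exp (ξ * ‖p.2‖ ^ 2)) ∂π = C := by
    intro π hπp hπ1 hπ2
    simp_rw [hsplit]
    rw [lintegral_add_right _ (show Measurable fun p : H × H =>
        ENNReal.ofReal (Real.exp (ξ * ‖p.2‖ ^ 2)) from Emeas.comp measurable_snd),
      lintegral_add_right _ (show Measurable fun p : H × H =>
        ENNReal.ofReal (Real.exp (ξ * ‖p.1‖ ^ 2)) from Emeas.comp measurable_fst),
      lintegral_const]
    rw [hC, ← hπ1, ← hπ2, lintegral_map Emeas measurable_fst,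
      lintegral_map Emeas measurable_snd]
    simp [hπp.measure_univ]
  -- Cauchy–Schwarz for each coupling
  have hCS : ∀ π : Measure (H × H), IsProbabilityMeasure π → π.map Prod.fst = μ →
      π.map Prod.snd = ν →
      (∫⁻ p, ENNReal.ofReal (Real.sqrt (min ‖p.1 - p.2‖ 1 *
          (1 + Real.exp (ξ * ‖p.1‖ ^ 2) + Real.exp (ξ * ‖p.2‖ ^ 2)))) ∂π) ^ 2 ≤
        (∫⁻ p, ENNReal.ofReal (min ‖p.1 - p.2‖ 1) ∂π) * C := by
    intro π hπp hπ1 hπ2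
    set Gr : H × H → ℝ≥0∞ := fun p => ENNReal.ofReal
      (1 + Real.exp (ξ * ‖p.1‖ ^ 2) + Real.exp (ξ * ‖p.2‖ ^ 2)) with hGr
    set G : H × H → ℝ≥0∞ := fun p => Gr p ^ (1 / 2 : ℝ) with hG
    have hGr1 : ∀ p, (1 : ℝ≥0∞) ≤ Gr p := by
      intro p
      rw [hGr, ← ENNReal.ofReal_one]
      refine ENNReal.ofReal_le_ofReal ?_
      have h1 := (Real.exp_pos (ξ * ‖p.1‖ ^ 2)).le
      have h2 := (Real.exp_pos (ξ * ‖p.2‖ ^ 2)).le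
      linarith
    have hGrtop : ∀ p, Gr p ≠ ⊤ := fun p => ENNReal.ofReal_ne_top
    have hG1 : ∀ p, (1 : ℝ≥0∞) ≤ G p := by
      intro p
      calc (1:ℝ≥0∞) = 1 ^ (1/2 : ℝ) := (ENNReal.one_rpow _).symm
        _ ≤ Gr p ^ (1/2 : ℝ) := ENNReal.rpow_le_rpow (hGr1 p) (by norm_num)
    have hG0 : ∀ p, G p ≠ 0 := fun p => (lt_of_lt_of_le zero_lt_one (hG1 p)).ne'
    have hGtop : ∀ p, G p ≠ ⊤ := fun p =>
      ENNReal.rpow_ne_top_of_nonneg (by norm_num) (hGrtop p)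
    have Gmeas : Measurable G :=
      ENNReal.continuous_rpow_const.measurable.comp gmeas
    -- measurable minorant of the sqrt cost with the same integral
    obtain ⟨h', h'meas, h'le, h'int⟩ := exists_measurable_le_lintegral_eq (μ := π)
      (fun p : H × H => ENNReal.ofReal (Real.sqrt (min ‖p.1 - p.2‖ 1 *
        (1 + Real.exp (ξ * ‖p.1‖ ^ 2) + Real.exp (ξ * ‖p.2‖ ^ 2)))))
    set F : H × H → ℝ≥0∞ := fun p => h' p / G p with hF
    have Fmeas : Measurable F := h'meas.div Gmeas
    have hFG : ∀ p, F p * G p = h' p := fun p =>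
      ENNReal.div_mul_cancel (hG0 p) (hGtop p)
    have hsq : ∀ p, h' p ^ (2 : ℝ) ≤
        ENNReal.ofReal (min ‖p.1 - p.2‖ 1) * Gr p := by
      intro p
      have hfnn : (0:ℝ) ≤ min ‖p.1 - p.2‖ 1 := le_min (norm_nonneg _) zero_le_one
      have h1 : ENNReal.ofReal (Real.sqrt (min ‖p.1 - p.2‖ 1 *
          (1 + Real.exp (ξ * ‖p.1‖ ^ 2) + Real.exp (ξ * ‖p.2‖ ^ 2)))) ^ (2:ℝ) =
          ENNReal.ofReal (min ‖p.1 - p.2‖ 1) * Gr p := by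
        rw [Real.sqrt_eq_rpow,
          ← ENNReal.ofReal_rpow_of_nonneg (by positivity) (by norm_num),
          ← ENNReal.rpow_mul]
        norm_num
        rfl
      rw [← h1]
      exact ENNReal.rpow_le_rpow (h'le p) (by norm_num)
    have hF2 : ∀ p, F p ^ (2:ℝ) ≤ ENNReal.ofReal (min ‖p.1 - p.2‖ 1) := by
      intro p
      rw [hF]
      simp only
      rw [ENNReal.div_rpow_of_nonneg _ _ (by norm_num : (0:ℝ) ≤ 2), hG,
        ← ENNReal.rpow_mul]
      have hG2 : Gr p ^ ((1/2 : ℝ) * 2) = Gr p := by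
        norm_num
      rw [hG2, ENNReal.div_le_iff_le_mul (Or.inl (by
          exact (lt_of_lt_of_le zero_lt_one (hGr1 p)).ne')) (Or.inl (hGrtop p))]
      exact hsq p
    have hconj : Real.HolderConjugate 2 2 := Real.HolderConjugate.two_two
    have hcs := ENNReal.lintegral_mul_le_Lp_mul_Lq π hconj
      Fmeas.aemeasurable Gmeas.aemeasurable
    have hG2int : ∫⁻ p, G p ^ (2:ℝ) ∂π = C := by
      have : ∀ p, G p ^ (2:ℝ) = Gr p := by
        intro p
        rw [hG]
        simp only
        rw [← ENNReal.rpow_mul]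
        norm_num
      simp_rw [this]
      exact hgint π hπp hπ1 hπ2
    calc (∫⁻ p, ENNReal.ofReal (Real.sqrt (min ‖p.1 - p.2‖ 1 *
          (1 + Real.exp (ξ * ‖p.1‖ ^ 2) + Real.exp (ξ * ‖p.2‖ ^ 2)))) ∂π) ^ 2
        = (∫⁻ p, h' p ∂π) ^ 2 := by rw [h'int]
      _ = (∫⁻ p, (F * G) p ∂π) ^ 2 := by
          congr 1
          refine lintegral_congr fun p => ?_
          rw [Pi.mul_apply, hFG]
      _ ≤ ((∫⁻ p, F p ^ (2:ℝ) ∂π) ^ (1/2 : ℝ) * (∫⁻ p, G p ^ (2:ℝ) ∂π) ^ (1/2 : ℝ)) ^ 2 :=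
          pow_le_pow_left₀ zero_le hcs 2
      _ = (∫⁻ p, F p ^ (2:ℝ) ∂π) * (∫⁻ p, G p ^ (2:ℝ) ∂π) := by
          rw [mul_pow, ← ENNReal.rpow_natCast (_ ^ (1/2 : ℝ)) 2,
            ← ENNReal.rpow_natCast ((∫⁻ p, G p ^ (2:ℝ) ∂π) ^ (1/2 : ℝ)) 2,
            ← ENNReal.rpow_mul, ← ENNReal.rpow_mul]
          norm_num
      _ ≤ (∫⁻ p, ENNReal.ofReal (min ‖p.1 - p.2‖ 1) ∂π) * C := by
          rw [hG2int]
          exact mul_le_mul_left (lintegral_mono fun p => hF2 p) C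
  by_cases hCtop : C = ⊤
  · by_cases hW : wassersteinCost (fun p : H × H => min ‖p.1 - p.2‖ 1) μ ν = 0
    · have hμν := eq_of_wasserstein_zero μ ν hW
      subst hμν
      have hdiagmeas : Measurable fun x : H => (x, x) :=
        measurable_id.prodMk measurable_id
      have hzero : wassersteinCost
          (fun p : H × H => Real.sqrt (min ‖p.1 - p.2‖ 1 *
            (1 + Real.exp (ξ * ‖p.1‖ ^ 2) + Real.exp (ξ * ‖p.2‖ ^ 2)))) μ μ = 0 := by
        refine le_antisymm ?_ zero_le
        have hfst : (μ.map fun x : H => (x, x)).map Prod.fst = μ := by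
          rw [Measure.map_map measurable_fst hdiagmeas]
          simp [Function.comp_def]
        have hsnd : (μ.map fun x : H => (x, x)).map Prod.snd = μ := by
          rw [Measure.map_map measurable_snd hdiagmeas]
          simp [Function.comp_def]
        refine le_trans (iInf_le _ ⟨μ.map fun x : H => (x, x),
          Measure.isProbabilityMeasure_map hdiagmeas.aemeasurable, hfst, hsnd⟩) ?_
        refine le_trans (lintegral_map_le _ (fun x : H => (x, x))) ?_
        simp
      rw [hzero]
      simp
    · rw [hCtop, ENNReal.mul_top hW]
      exact le_top
  · haveI : Nonempty {π : Measure (H × H) //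
        IsProbabilityMeasure π ∧ π.map Prod.fst = μ ∧ π.map Prod.snd = ν} := by
      refine ⟨⟨μ.prod ν, inferInstance, ?_, ?_⟩⟩
      · rw [Measure.map_fst_prod]; simp
      · rw [Measure.map_snd_prod]; simp
    rw [wassersteinCost, wassersteinCost, ENNReal.iInf_mul (fun h => absurd h hCtop)]
    refine le_iInf fun π => ?_
    calc (⨅ π' : {π' : Measure (H × H) //
          IsProbabilityMeasure π' ∧ π'.map Prod.fst = μ ∧ π'.map Prod.snd = ν},
          ∫⁻ p, ENNReal.ofReal (Real.sqrt (min ‖p.1 - p.2‖ 1 *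
            (1 + Real.exp (ξ * ‖p.1‖ ^ 2) + Real.exp (ξ * ‖p.2‖ ^ 2)))) ∂π'.val) ^ 2
        ≤ (∫⁻ p, ENNReal.ofReal (Real.sqrt (min ‖p.1 - p.2‖ 1 *
            (1 + Real.exp (ξ * ‖p.1‖ ^ 2) + Real.exp (ξ * ‖p.2‖ ^ 2)))) ∂π.val) ^ 2 :=
          pow_le_pow_left₀ zero_le (iInf_le _ π) 2
      _ ≤ (∫⁻ p, ENNReal.ofReal (min ‖p.1 - p.2‖ 1) ∂π.val) * C :=
          hCS π.val π.prop.1 π.prop.2.1 π.prop.2.2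
end
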